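/- For every odd integer m ≥ 3 and every real r > 1, the integral ∫₀^{2π} φ(r cos θ) cos(mθ) dθ equals (4/(m(m²−1)))·( m·√(r²−1)·cos(m·arctan(√(r²−1))) − sin(m·arctan(√(r²−1))) ). -/

import Mathlib

open Real

/-- The continuous piecewise linear saturation function. -/
noncomputable def phi (s : ℝ) : ℝ := if s < -1 then -1 else if s ≤ 1 then s else 1

lemma phi_of_one_le {x : ℝ} (h : 1 ≤ x) : phi x = 1 := by
  unfold phi
  rcases lt_or_ge 1 x with h2 | h2
  · rw [if_neg (by linarith), if_neg (by linarith)]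
  · have hx : x = 1 := le_antisymm h2 h
    rw [if_neg (by linarith), if_pos (by linarith), hx]

lemma phi_of_le_neg_one {x : ℝ} (h : x ≤ -1) : phi x = -1 := by
  unfold phi
  rcases lt_or_ge x (-1) with h2 | h2
  · rw [if_pos h2]
  · have hx : x = -1 := le_antisymm h h2
    rw [if_neg (by linarith), if_pos (by linarith), hx]

lemma phi_of_mem {x : ℝ} (h1 : -1 ≤ x) (h2 : x ≤ 1) : phi x = x := by
  unfold phi
  rw [if_neg (not_lt.2 h1), if_pos h2]

lemma phi_continuous : Continuous phi := by
  have h : phi = fun x => max (-1) (min x 1) := by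
    funext x
    unfold phi
    rcases lt_or_ge x (-1) with h1 | h1
    · rw [if_pos h1, min_eq_left (by linarith), max_eq_left (by linarith)]
    · rcases le_or_gt x 1 with h2 | h2
      · rw [if_neg (not_lt.2 h1), if_pos h2, min_eq_left h2, max_eq_right h1]
      · rw [if_neg (not_lt.2 h1), if_neg (not_le.2 h2), min_eq_right h2.le,
          max_eq_right (by linarith)]
  rw [h]
  exact continuous_const.max ((continuous_id.min continuous_const))

lemma hasDerivAt_sin_mul (c θ : ℝ) :
    HasDerivAt (fun x : ℝ => Real.sin (c * x)) (c * Real.cos (c * θ)) θ := by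
  have h1 : HasDerivAt (fun x : ℝ => c * x) c θ := by
    simpa using (hasDerivAt_id θ).const_mul c
  have := (Real.hasDerivAt_sin (c * θ)).comp θ h1
  exact this.congr_deriv (mul_comm _ _)

lemma sin_shift (j : ℕ) (x : ℝ) : Real.sin (2 * (j : ℝ) * π + x) = Real.sin x := by
  rw [show 2 * (j : ℝ) * π + x = x + (j : ℝ) * (2 * π) by ring,
    Real.sin_add_nat_mul_two_pi]

theorem Im_eq_Lm (m : ℕ) (hm : Odd m) (hm3 : 3 ≤ m) (r : ℝ) (hr : 1 < r) :
    ∫ θ in (0:ℝ)..(2 * π), phi (r * Real.cos θ) * Real.cos ((m:ℝ) * θ) =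
      (4 / ((m:ℝ) * ((m:ℝ) ^ 2 - 1))) *
        ((m:ℝ) * Real.sqrt (r ^ 2 - 1) *
            Real.cos ((m:ℝ) * Real.arctan (Real.sqrt (r ^ 2 - 1))) -
          Real.sin ((m:ℝ) * Real.arctan (Real.sqrt (r ^ 2 - 1)))) := by
  obtain ⟨k, hk⟩ := hm
  have hk1 : 1 ≤ k := by omega
  set M : ℝ := (m : ℝ) with hMdef
  have hM : M = 2 * (k : ℝ) + 1 := by rw [hMdef, hk]; push_cast; ring
  have hM3 : (3 : ℝ) ≤ M := by rw [hMdef]; exact_mod_cast hm3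
  have hM0 : M ≠ 0 := by linarith
  have hMp1 : M + 1 ≠ 0 := by linarith
  have hMm1 : M - 1 ≠ 0 := by linarith
  have hr0 : (0 : ℝ) < r := by linarith
  set s : ℝ := Real.sqrt (r ^ 2 - 1) with hs
  have hr2 : (0 : ℝ) ≤ r ^ 2 - 1 := by nlinarith
  have hs0 : 0 < s := Real.sqrt_pos.2 (by nlinarith)
  set α : ℝ := Real.arctan s with hαdef
  have hα0 : 0 < α := by rw [hαdef, ← Real.arctan_zero]; exact Real.arctan_strictMono hs0
  have hα2 : α < π / 2 := Real.arctan_lt_pi_div_two s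
  have hπ : 0 < π := Real.pi_pos
  have h1s : (1 : ℝ) + s ^ 2 = r ^ 2 := by
    rw [hs, Real.sq_sqrt hr2]; ring
  have hcosα : Real.cos α = 1 / r := by
    rw [hαdef, Real.cos_arctan, h1s, Real.sqrt_sq hr0.le]
  have hsinα : Real.sin α = s / r := by
    rw [hαdef, Real.sin_arctan, h1s, Real.sqrt_sq hr0.le]
  -- the integrand
  set f : ℝ → ℝ := fun θ => phi (r * Real.cos θ) * Real.cos (M * θ) with hf
  have hfc : Continuous f := by
    apply Continuous.mul
    · exact phi_continuous.comp (continuous_const.mul Real.continuous_cos)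
    · exact Real.continuous_cos.comp (continuous_const.mul continuous_id)
  have I : ∀ a b : ℝ, IntervalIntegrable f MeasureTheory.volume a b := fun a b =>
    hfc.intervalIntegrable a b
  -- ordering of cut points
  have ho1 : (0:ℝ) ≤ α := hα0.le
  have ho2 : α ≤ π - α := by linarith
  have ho3 : π - α ≤ π + α := by linarith
  have ho4 : π + α ≤ 2 * π - α := by linarith
  have ho5 : 2 * π - α ≤ 2 * π := by linarith
  -- bound: cos α ≤ cos θ for θ ∈ [0, α] (and similar)
  have hcos_ge : ∀ θ : ℝ, 0 ≤ θ → θ ≤ α → 1 ≤ r * Real.cos θ := by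
    intro θ h1 h2
    have := Real.cos_le_cos_of_nonneg_of_le_pi h1 (by linarith) h2
    rw [hcosα] at this
    calc (1:ℝ) = r * (1 / r) := by field_simp
    _ ≤ r * Real.cos θ := by apply mul_le_mul_of_nonneg_left this hr0.le
  have hcos_mid : ∀ θ : ℝ, α ≤ θ → θ ≤ π - α →
      -1 ≤ r * Real.cos θ ∧ r * Real.cos θ ≤ 1 := by
    intro θ h1 h2
    have hu : Real.cos θ ≤ Real.cos α :=
      Real.cos_le_cos_of_nonneg_of_le_pi hα0.le (by linarith) h1
    have hl : Real.cos (π - α) ≤ Real.cos θ :=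
      Real.cos_le_cos_of_nonneg_of_le_pi (by linarith) (by linarith) h2
    rw [Real.cos_pi_sub, hcosα] at hl
    rw [hcosα] at hu
    constructor
    · calc (-1:ℝ) = r * (-(1/r)) := by field_simp
      _ ≤ r * Real.cos θ := mul_le_mul_of_nonneg_left hl hr0.le
    · calc r * Real.cos θ ≤ r * (1/r) := mul_le_mul_of_nonneg_left hu hr0.le
      _ = 1 := by field_simp
  have hcos_le : ∀ θ : ℝ, π - α ≤ θ → θ ≤ π + α → r * Real.cos θ ≤ -1 := by
    intro θ h1 h2
    have habs : |θ - π| ≤ α := abs_le.2 ⟨by linarith, by linarith⟩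
    have := Real.cos_le_cos_of_nonneg_of_le_pi (abs_nonneg (θ - π)) (by linarith) habs
    rw [Real.cos_abs, Real.cos_sub_pi, hcosα] at this
    have hcθ : Real.cos θ ≤ -(1/r) := by linarith
    calc r * Real.cos θ ≤ r * (-(1/r)) := mul_le_mul_of_nonneg_left hcθ hr0.le
    _ = -1 := by field_simp
  -- split the integral
  have hsplit : (∫ θ in (0:ℝ)..(2 * π), f θ) =
      (∫ θ in (0:ℝ)..α, f θ) + (∫ θ in α..(π - α), f θ) +
        (∫ θ in (π - α)..(π + α), f θ) + (∫ θ in (π + α)..(2 * π - α), f θ) +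
        (∫ θ in (2 * π - α)..(2 * π), f θ) := by
    rw [intervalIntegral.integral_add_adjacent_intervals (I 0 α) (I α (π - α)),
      intervalIntegral.integral_add_adjacent_intervals (I 0 (π - α)) (I (π - α) (π + α)),
      intervalIntegral.integral_add_adjacent_intervals (I 0 (π + α)) (I (π + α) (2 * π - α)),
      intervalIntegral.integral_add_adjacent_intervals (I 0 (2 * π - α)) (I (2 * π - α) (2 * π))]
  -- antiderivatives
  set F1 : ℝ → ℝ := fun θ => Real.sin (M * θ) / M with hF1
  set F2 : ℝ → ℝ := fun θ =>
    r * (Real.sin ((M + 1) * θ) / (M + 1) + Real.sin ((M - 1) * θ) / (M - 1)) / 2 with hF2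
  have hF1d : ∀ θ : ℝ, HasDerivAt F1 (Real.cos (M * θ)) θ := by
    intro θ
    have := (hasDerivAt_sin_mul M θ).div_const M
    refine this.congr_deriv ?_
    exact mul_div_cancel_left₀ _ hM0
  have hF2d : ∀ θ : ℝ, HasDerivAt F2 (r * Real.cos θ * Real.cos (M * θ)) θ := by
    intro θ
    have h1 := (hasDerivAt_sin_mul (M + 1) θ).div_const (M + 1)
    have h2 := (hasDerivAt_sin_mul (M - 1) θ).div_const (M - 1)
    have := (((h1.add h2).const_mul r).div_const 2)
    refine this.congr_deriv ?_
    have e1 : (M + 1) * θ = M * θ + θ := by ring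
    have e2 : (M - 1) * θ = M * θ - θ := by ring
    rw [e1, e2, Real.cos_add, Real.cos_sub]
    rw [mul_div_cancel_left₀ _ hMp1, mul_div_cancel_left₀ _ hMm1]
    ring
  -- piece 1
  have P1 : (∫ θ in (0:ℝ)..α, f θ) = Real.sin (M * α) / M := by
    rw [intervalIntegral.integral_eq_sub_of_hasDerivAt (f := F1) ?_ (I 0 α)]
    · rw [hF1]; simp
    · intro θ hθ
      rw [Set.uIcc_of_le ho1] at hθ
      have hφ : phi (r * Real.cos θ) = 1 := phi_of_one_le (hcos_ge θ hθ.1 hθ.2)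
      have : f θ = Real.cos (M * θ) := by rw [hf]; simp only; rw [hφ, one_mul]
      rw [this]
      exact hF1d θ
  -- piece 2
  have P2 : (∫ θ in α..(π - α), f θ) = F2 (π - α) - F2 α := by
    rw [intervalIntegral.integral_eq_sub_of_hasDerivAt (f := F2) ?_ (I α (π - α))]
    intro θ hθ
    rw [Set.uIcc_of_le ho2] at hθ
    obtain ⟨hl, hu⟩ := hcos_mid θ hθ.1 hθ.2
    have hφ : phi (r * Real.cos θ) = r * Real.cos θ := phi_of_mem hl hu
    have : f θ = r * Real.cos θ * Real.cos (M * θ) := by rw [hf]; simp only; rw [hφ]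
    rw [this]
    exact hF2d θ
  -- piece 3
  have P3 : (∫ θ in (π - α)..(π + α), f θ) =
      -(Real.sin (M * (π + α)) / M) + Real.sin (M * (π - α)) / M := by
    rw [intervalIntegral.integral_eq_sub_of_hasDerivAt (f := fun θ => -F1 θ) ?_
      (I (π - α) (π + α))]
    · rw [hF1]; simp only; ring
    · intro θ hθ
      rw [Set.uIcc_of_le ho3] at hθ
      have hφ : phi (r * Real.cos θ) = -1 := phi_of_le_neg_one (hcos_le θ hθ.1 hθ.2)
      have : f θ = -Real.cos (M * θ) := by rw [hf]; simp only; rw [hφ]; ring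
      rw [this]
      exact (hF1d θ).neg
  -- piece 4
  have P4 : (∫ θ in (π + α)..(2 * π - α), f θ) = F2 (2 * π - α) - F2 (π + α) := by
    rw [intervalIntegral.integral_eq_sub_of_hasDerivAt (f := F2) ?_ (I (π + α) (2 * π - α))]
    intro θ hθ
    rw [Set.uIcc_of_le ho4] at hθ
    have hcθ : Real.cos θ = Real.cos (2 * π - θ) := (Real.cos_two_pi_sub θ).symm
    obtain ⟨hl, hu⟩ := hcos_mid (2 * π - θ) (by linarith [hθ.2]) (by linarith [hθ.1])
    rw [← hcθ] at hl hu
    have hφ : phi (r * Real.cos θ) = r * Real.cos θ := phi_of_mem hl hu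
    have : f θ = r * Real.cos θ * Real.cos (M * θ) := by rw [hf]; simp only; rw [hφ]
    rw [this]
    exact hF2d θ
  -- piece 5
  have P5 : (∫ θ in (2 * π - α)..(2 * π), f θ) =
      Real.sin (M * (2 * π)) / M - Real.sin (M * (2 * π - α)) / M := by
    rw [intervalIntegral.integral_eq_sub_of_hasDerivAt (f := F1) ?_ (I (2 * π - α) (2 * π))]
    intro θ hθ
    rw [Set.uIcc_of_le ho5] at hθ
    have hge := hcos_ge (2 * π - θ) (by linarith [hθ.2]) (by linarith [hθ.1])
    rw [Real.cos_two_pi_sub] at hge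
    have hφ : phi (r * Real.cos θ) = 1 := phi_of_one_le hge
    have : f θ = Real.cos (M * θ) := by rw [hf]; simp only; rw [hφ, one_mul]
    rw [this]
    exact hF1d θ
  -- trig evaluations
  have eodd1 : Real.sin (M * (π - α)) = Real.sin (M * α) := by
    rw [show M * (π - α) = 2 * (k : ℝ) * π + (π - M * α) by rw [hM]; ring,
      sin_shift, Real.sin_pi_sub]
  have eodd2 : Real.sin (M * (π + α)) = -Real.sin (M * α) := by
    rw [show M * (π + α) = 2 * (k : ℝ) * π + (M * α + π) by rw [hM]; ring,
      sin_shift, Real.sin_add_pi]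
  have eodd3 : Real.sin (M * (2 * π)) = 0 := by
    rw [show M * (2 * π) = 2 * (m : ℝ) * π + 0 by rw [hMdef]; ring, sin_shift, Real.sin_zero]
  have eodd4 : Real.sin (M * (2 * π - α)) = -Real.sin (M * α) := by
    rw [show M * (2 * π - α) = 2 * (m : ℝ) * π + (-(M * α)) by rw [hMdef]; ring,
      sin_shift, Real.sin_neg]
  have eev1 : Real.sin ((M + 1) * (π - α)) = -Real.sin ((M + 1) * α) := by
    rw [show (M + 1) * (π - α) = 2 * ((k : ℝ) + 1) * π + (-((M + 1) * α)) by rw [hM]; ring,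
      show ((k : ℝ) + 1) = ((k + 1 : ℕ) : ℝ) by push_cast; ring, sin_shift, Real.sin_neg]
  have eev2 : Real.sin ((M - 1) * (π - α)) = -Real.sin ((M - 1) * α) := by
    rw [show (M - 1) * (π - α) = 2 * (k : ℝ) * π + (-((M - 1) * α)) by rw [hM]; ring,
      sin_shift, Real.sin_neg]
  have eev3 : Real.sin ((M + 1) * (π + α)) = Real.sin ((M + 1) * α) := by
    rw [show (M + 1) * (π + α) = 2 * ((k : ℝ) + 1) * π + ((M + 1) * α) by rw [hM]; ring,
      show ((k : ℝ) + 1) = ((k + 1 : ℕ) : ℝ) by push_cast; ring, sin_shift]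
  have eev4 : Real.sin ((M - 1) * (π + α)) = Real.sin ((M - 1) * α) := by
    rw [show (M - 1) * (π + α) = 2 * (k : ℝ) * π + ((M - 1) * α) by rw [hM]; ring, sin_shift]
  have eev5 : Real.sin ((M + 1) * (2 * π - α)) = -Real.sin ((M + 1) * α) := by
    rw [show (M + 1) * (2 * π - α) = 2 * (2 * (k : ℝ) + 2) * π + (-((M + 1) * α)) by
        rw [hM]; ring,
      show (2 * (k : ℝ) + 2) = ((2 * k + 2 : ℕ) : ℝ) by push_cast; ring, sin_shift,
      Real.sin_neg]
  have eev6 : Real.sin ((M - 1) * (2 * π - α)) = -Real.sin ((M - 1) * α) := by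
    rw [show (M - 1) * (2 * π - α) = 2 * (2 * (k : ℝ)) * π + (-((M - 1) * α)) by rw [hM]; ring,
      show (2 * (k : ℝ)) = ((2 * k : ℕ) : ℝ) by push_cast; ring, sin_shift, Real.sin_neg]
  -- expand sin((M±1)α)
  have esum1 : Real.sin ((M + 1) * α) =
      Real.sin (M * α) * (1 / r) + Real.cos (M * α) * (s / r) := by
    rw [show (M + 1) * α = M * α + α by ring, Real.sin_add, hcosα, hsinα]
  have esum2 : Real.sin ((M - 1) * α) =
      Real.sin (M * α) * (1 / r) - Real.cos (M * α) * (s / r) := by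
    rw [show (M - 1) * α = M * α - α by ring, Real.sin_sub, hcosα, hsinα]
  -- put it all together
  rw [hsplit, P1, P2, P3, P4, P5, hF2]
  simp only
  rw [eodd1, eodd2, eodd3, eodd4, eev1, eev2, eev3, eev4, eev5, eev6, esum1, esum2]
  have hMsq : M * (M ^ 2 - 1) ≠ 0 := by
    have : M ^ 2 - 1 = (M - 1) * (M + 1) := by ring
    rw [this]
    exact mul_ne_zero hM0 (mul_ne_zero hMm1 hMp1)
  have hM21 : M ^ 2 - 1 ≠ 0 := by nlinarith
  field_simp
  ring
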